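/- For z \ne 0, the derivative of the generalized Bessel polynomial satisfies d/dz Y_n^\mu(z) = ((n+\mu+1)/z) (Y_n^{\mu+1}(z) - Y_n^\mu(z)). -/

import Mathlib

open Finset

/-- Generalized Bessel polynomial `Y_n^μ(z)`. -/
noncomputable def genBessel (n : ℕ) (μ z : ℂ) : ℂ :=
  ∑ k ∈ Finset.range (n + 1),
    (n.choose k : ℂ) * (ascPochhammer ℂ k).eval ((n : ℂ) + μ + 1) * (z / 2) ^ k

lemma poch_shift (k : ℕ) (a : ℂ) :
    a * (ascPochhammer ℂ k).eval (a + 1) - a * (ascPochhammer ℂ k).eval a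
      = (k : ℂ) * (ascPochhammer ℂ k).eval a := by
  have hl : (ascPochhammer ℂ (k + 1)).eval a
      = a * (ascPochhammer ℂ k).eval (a + 1) := by
    rw [ascPochhammer_succ_left]; simp [Polynomial.eval_comp]
  have hr : (ascPochhammer ℂ (k + 1)).eval a
      = (ascPochhammer ℂ k).eval a * (a + k) := by
    rw [ascPochhammer_succ_right]; simp
  have h1 : a * (ascPochhammer ℂ k).eval (a + 1)
      = (ascPochhammer ℂ k).eval a * (a + k) := by rw [← hl, hr]
  linear_combination h1

theorem genBessel_hasDerivAt_diff (n : ℕ) (μ z : ℂ) (hz : z ≠ 0) :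
    HasDerivAt (fun w => genBessel n μ w)
      ((((n : ℂ) + μ + 1) / z) * (genBessel n (μ + 1) z - genBessel n μ z)) z := by
  set a : ℂ := (n : ℂ) + μ + 1 with ha
  have key : HasDerivAt (fun w => genBessel n μ w)
      (∑ k ∈ Finset.range (n + 1),
        (n.choose k : ℂ) * (ascPochhammer ℂ k).eval a * ((k : ℂ) * (z / 2) ^ (k - 1) * (1 / 2))) z := by
    unfold genBessel
    apply HasDerivAt.fun_sum
    intro k _
    have h : HasDerivAt (fun w : ℂ => (w / 2) ^ k) ((k : ℂ) * (z / 2) ^ (k - 1) * (1 / 2)) z := by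
      have := ((hasDerivAt_id z).div_const 2).fun_pow k
      simpa using this
    simpa [mul_assoc] using h.const_mul ((n.choose k : ℂ) * (ascPochhammer ℂ k).eval a)
  convert key using 1
  have hμ : (n : ℂ) + (μ + 1) + 1 = a + 1 := by rw [ha]; ring
  unfold genBessel
  rw [hμ, ← ha, ← Finset.sum_sub_distrib, Finset.mul_sum]
  refine Finset.sum_congr rfl fun k _ => ?_
  rcases k with _ | k
  · simp
  · have hp := poch_shift (k + 1) a
    simp only [Nat.add_sub_cancel]
    have step : a / z * ((n.choose (k+1) : ℂ) * (ascPochhammer ℂ (k+1)).eval (a+1) * (z / 2) ^ (k+1)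
          - (n.choose (k+1) : ℂ) * (ascPochhammer ℂ (k+1)).eval a * (z / 2) ^ (k+1))
        = (a * (ascPochhammer ℂ (k+1)).eval (a+1) - a * (ascPochhammer ℂ (k+1)).eval a)
            * ((n.choose (k+1) : ℂ) * (z / 2) ^ k / 2) := by
      rw [pow_succ]
      field_simp
    rw [step, hp]
    push_cast
    ring
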